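/- For any differentiable model f_i : ℝ^m → ℝ, any differentiable loss l : ℝ → ℝ, any parameter w ∈ ℝ^m and noise values v_i satisfying y_i = f_i(w) + v_i for i = 1, …, T, any initialization w_0, any step size η > 0, and any T ≥ 1, the SMD iterates satisfy D_ψ(w, w_0) + η Σ_{i=1}^T l(v_i) = D_ψ(w, w_T) + Σ_{i=1}^T ( E_i(w_i, w_{i−1}) + η D_{L_i}(w, w_{i−1}) ), where E_i(w_i, w_{i−1}) := D_ψ(w_i, w_{i−1}) − η D_{L_i}(w_i, w_{i−1}) + η L_i(w_i). -/
import Mathlib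


open scoped RealInnerProductSpace

/-- Bregman-divergence-like quantity `D_g(u, u') = g(u) - g(u') - ∇g(u')ᵀ(u - u')` of a
(not necessarily convex) function `g`. -/
noncomputable def Dbreg {m : ℕ} (g : EuclideanSpace ℝ (Fin m) → ℝ)
    (u u' : EuclideanSpace ℝ (Fin m)) : ℝ :=
  g u - g u' - ⟪gradient g u', u - u'⟫

/-- Lemma 4, fundamental telescoped identity for SMD with a general model,
general loss and general strictly convex potential. -/
theorem stmt_8 {m : ℕ} (T : ℕ) (hT : 1 ≤ T) (y : ℕ → ℝ)
    (f : ℕ → EuclideanSpace ℝ (Fin m) → ℝ) (hf : ∀ i, Differentiable ℝ (f i))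
    (l : ℝ → ℝ) (hl : Differentiable ℝ l)
    (ψ : EuclideanSpace ℝ (Fin m) → ℝ) (hψ : Differentiable ℝ ψ)
    (hψconv : StrictConvexOn ℝ Set.univ ψ)
    (L : ℕ → EuclideanSpace ℝ (Fin m) → ℝ)
    (hLdef : ∀ i u, L i u = l (y i - f i u))
    (η : ℝ) (hη : 0 < η)
    (w₀ : EuclideanSpace ℝ (Fin m))
    (w : ℕ → EuclideanSpace ℝ (Fin m)) (hw0 : w 0 = w₀)
    (hupd : ∀ i : ℕ,
      gradient ψ (w (i + 1)) = gradient ψ (w i) - η • gradient (L (i + 1)) (w i))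
    (wstar : EuclideanSpace ℝ (Fin m)) (v : ℕ → ℝ)
    (hdata : ∀ i : ℕ, y (i + 1) = f (i + 1) wstar + v (i + 1)) :
    Dbreg ψ wstar w₀ + η * ∑ i ∈ Finset.range T, l (v (i + 1)) =
      Dbreg ψ wstar (w T)
        + ∑ i ∈ Finset.range T,
            ((Dbreg ψ (w (i + 1)) (w i) - η * Dbreg (L (i + 1)) (w (i + 1)) (w i)
                + η * L (i + 1) (w (i + 1)))
              + η * Dbreg (L (i + 1)) wstar (w i)) := by
  have key : ∀ i : ℕ,
      Dbreg ψ wstar (w i) - Dbreg ψ wstar (w (i + 1)) =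
        ((Dbreg ψ (w (i + 1)) (w i) - η * Dbreg (L (i + 1)) (w (i + 1)) (w i)
            + η * L (i + 1) (w (i + 1)))
          + η * Dbreg (L (i + 1)) wstar (w i)) - η * l (v (i + 1)) := by
    intro i
    have hv : y (i + 1) - f (i + 1) wstar = v (i + 1) := by rw [hdata]; ring
    have hL : L (i + 1) wstar = l (v (i + 1)) := by rw [hLdef, hv]
    simp only [Dbreg, hupd i, ← hL, inner_sub_left, inner_sub_right,
      real_inner_smul_left]
    ring
  have tele : ∑ i ∈ Finset.range T,
      (Dbreg ψ wstar (w i) - Dbreg ψ wstar (w (i + 1))) =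
      Dbreg ψ wstar (w 0) - Dbreg ψ wstar (w T) :=
    Finset.sum_range_sub' (fun i => Dbreg ψ wstar (w i)) T
  rw [Finset.sum_congr rfl (fun i _ => key i)] at tele
  rw [Finset.sum_sub_distrib, ← Finset.mul_sum] at tele
  rw [hw0] at tele
  linarith
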